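/- arXiv:2206.00833 — 2 statements merged into one kernel-verified Lean document; each statement's English description precedes it below -/
import Mathlib

section
/- For two softmax distributions π(a) ∝ exp(f(a)) and π̃(a) ∝ exp(g(a)) over a finite set 𝒜, the log-ratio satisfies |log(π̃(a)/π(a))| ≤ |f(a)-g(a)| + Σ_{a'} (π(a') + π̃(a')) |f(a')-g(a')| for every a. -/
open Finset Real

lemma sum_exp_pos' {𝒜 : Type*} [Fintype 𝒜] [Nonempty 𝒜] (f : 𝒜 → ℝ) :
    0 < ∑ a : 𝒜, Real.exp (f a) :=
  Finset.sum_pos (fun a _ => Real.exp_pos _) Finset.univ_nonempty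

lemma log_sum_exp_sub_le {𝒜 : Type*} [Fintype 𝒜] [Nonempty 𝒜] (f g : 𝒜 → ℝ) :
    Real.log (∑ a : 𝒜, Real.exp (f a)) - Real.log (∑ a : 𝒜, Real.exp (g a)) ≤
      ∑ a : 𝒜, (Real.exp (f a) / ∑ a' : 𝒜, Real.exp (f a')) * |f a - g a| := by
  have hSf : 0 < ∑ a : 𝒜, Real.exp (f a) := sum_exp_pos' f
  have hSg : 0 < ∑ a : 𝒜, Real.exp (g a) := sum_exp_pos' g
  set Sf := ∑ a : 𝒜, Real.exp (f a) with hSfdef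
  set Sg := ∑ a : 𝒜, Real.exp (g a) with hSgdef
  set w : 𝒜 → ℝ := fun a => Real.exp (f a) / Sf with hw
  have hw0 : ∀ a ∈ Finset.univ (α := 𝒜), 0 ≤ w a := fun a _ =>
    div_nonneg (Real.exp_pos _).le hSf.le
  have hw1 : ∑ a : 𝒜, w a = 1 := by
    rw [← Finset.sum_div]; exact div_self hSf.ne'
  have jensen := convexOn_exp.map_sum_le (t := Finset.univ) (w := w)
      (p := fun a => g a - f a) hw0 hw1 (fun _ _ => Set.mem_univ _)
  have hz : ∑ a : 𝒜, w a • Real.exp (g a - f a) = Sg / Sf := by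
    rw [hSgdef, Finset.sum_div]
    refine Finset.sum_congr rfl fun a _ => ?_
    rw [smul_eq_mul, hw, Real.exp_sub]
    field_simp
  have key : Real.exp (∑ a : 𝒜, w a • (g a - f a)) ≤ Sg / Sf := hz ▸ jensen
  have hlog : ∑ a : 𝒜, w a • (g a - f a) ≤ Real.log (Sg / Sf) := by
    have := Real.log_le_log (Real.exp_pos _) key
    rwa [Real.log_exp] at this
  rw [Real.log_div hSg.ne' hSf.ne'] at hlog
  have h2 : -∑ a : 𝒜, w a * |f a - g a| ≤ ∑ a : 𝒜, w a • (g a - f a) := by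
    rw [← Finset.sum_neg_distrib]
    refine Finset.sum_le_sum fun a _ => ?_
    rw [smul_eq_mul, ← mul_neg]
    refine mul_le_mul_of_nonneg_left ?_ (hw0 a (Finset.mem_univ a))
    rw [← neg_sub (f a) (g a)]
    exact neg_le_neg (le_abs_self _)
  linarith [le_trans h2 hlog]

theorem stmt_8 {𝒜 : Type*} [Fintype 𝒜] [Nonempty 𝒜] (f g : 𝒜 → ℝ) :
    ∀ a : 𝒜,
      |Real.log ((Real.exp (g a) / ∑ a' : 𝒜, Real.exp (g a')) /
          (Real.exp (f a) / ∑ a' : 𝒜, Real.exp (f a')))| ≤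
        |f a - g a| +
          ∑ a' : 𝒜,
            ((Real.exp (f a') / ∑ a'' : 𝒜, Real.exp (f a'')) +
              (Real.exp (g a') / ∑ a'' : 𝒜, Real.exp (g a''))) * |f a' - g a'| := by
  intro a
  have hSf : 0 < ∑ a' : 𝒜, Real.exp (f a') := sum_exp_pos' f
  have hSg : 0 < ∑ a' : 𝒜, Real.exp (g a') := sum_exp_pos' g
  have hrw : Real.log ((Real.exp (g a) / ∑ a' : 𝒜, Real.exp (g a')) /
      (Real.exp (f a) / ∑ a' : 𝒜, Real.exp (f a'))) =
      (g a - f a) + (Real.log (∑ a' : 𝒜, Real.exp (f a')) -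
        Real.log (∑ a' : 𝒜, Real.exp (g a'))) := by
    rw [Real.log_div (by positivity) (by positivity),
        Real.log_div (Real.exp_ne_zero _) hSg.ne',
        Real.log_div (Real.exp_ne_zero _) hSf.ne', Real.log_exp, Real.log_exp]
    ring
  rw [hrw]
  have h1 : |(g a - f a) + (Real.log (∑ a' : 𝒜, Real.exp (f a')) -
      Real.log (∑ a' : 𝒜, Real.exp (g a')))| ≤ |g a - f a| +
      |Real.log (∑ a' : 𝒜, Real.exp (f a')) - Real.log (∑ a' : 𝒜, Real.exp (g a'))| :=
    abs_add_le _ _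
  have h2 : |Real.log (∑ a' : 𝒜, Real.exp (f a')) -
      Real.log (∑ a' : 𝒜, Real.exp (g a'))| ≤
      ∑ a' : 𝒜, ((Real.exp (f a') / ∑ a'' : 𝒜, Real.exp (f a'')) +
        (Real.exp (g a') / ∑ a'' : 𝒜, Real.exp (g a''))) * |f a' - g a'| := by
    rw [abs_sub_le_iff]
    constructor
    · refine (log_sum_exp_sub_le f g).trans (Finset.sum_le_sum fun a' _ => ?_)
      refine mul_le_mul_of_nonneg_right ?_ (abs_nonneg _)
      have : 0 ≤ Real.exp (g a') / ∑ a'' : 𝒜, Real.exp (g a'') := by positivity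
      linarith
    · have := log_sum_exp_sub_le g f
      refine this.trans (Finset.sum_le_sum fun a' _ => ?_)
      rw [abs_sub_comm (g a') (f a')]
      refine mul_le_mul_of_nonneg_right ?_ (abs_nonneg _)
      have : 0 ≤ Real.exp (f a') / ∑ a'' : 𝒜, Real.exp (f a'') := by positivity
      linarith
  calc _ ≤ _ := h1
    _ ≤ _ := by rw [abs_sub_comm (g a) (f a)]; exact add_le_add_right h2 _
end

section
/- For θ_i, θ_i(0) ∈ ℝ^d with max_i ‖θ_i - θ_i(0)‖₂ ≤ R₀/√m and any x with ‖x‖₂ ≤ 1, the sum (1/√m) Σ_{i=1}^m |(1{θ_iᵀx ≥ 0} - 1{θ_i(0)ᵀx ≥ 0}) θ_i(0)ᵀx| is at most (R₀/m) Σ_{i=1}^m 1{|θ_i(0)ᵀx| ≤ R₀/√m}. -/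
open scoped RealInnerProductSpace

theorem stmt_11 {d : ℕ} (m : ℕ) (hm : 0 < m) (R₀ : ℝ) (hR₀ : 0 < R₀)
    (θ θ₀ : Fin m → EuclideanSpace ℝ (Fin d))
    (hclose : ∀ i, ‖θ i - θ₀ i‖ ≤ R₀ / Real.sqrt m)
    (x : EuclideanSpace ℝ (Fin d)) (hx : ‖x‖ ≤ 1) :
    (1 / Real.sqrt m) *
        ∑ i : Fin m,
          |((if 0 ≤ ⟪θ i, x⟫ then (1 : ℝ) else 0) -
              (if 0 ≤ ⟪θ₀ i, x⟫ then (1 : ℝ) else 0)) * ⟪θ₀ i, x⟫| ≤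
      (R₀ / m) * ∑ i : Fin m, (if |⟪θ₀ i, x⟫| ≤ R₀ / Real.sqrt m then (1 : ℝ) else 0) := by
  have hs : (0:ℝ) < Real.sqrt m := Real.sqrt_pos.mpr (by exact_mod_cast hm)
  have hRs : (0:ℝ) ≤ R₀ / Real.sqrt m := le_of_lt (div_pos hR₀ hs)
  have key : ∀ i : Fin m,
      |((if 0 ≤ ⟪θ i, x⟫ then (1 : ℝ) else 0) -
        (if 0 ≤ ⟪θ₀ i, x⟫ then (1 : ℝ) else 0)) * ⟪θ₀ i, x⟫| ≤
      (R₀ / Real.sqrt m) * (if |⟪θ₀ i, x⟫| ≤ R₀ / Real.sqrt m then (1 : ℝ) else 0) := by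
    intro i
    have hdiff : |⟪θ i - θ₀ i, x⟫| ≤ R₀ / Real.sqrt m := by
      calc |⟪θ i - θ₀ i, x⟫| ≤ ‖θ i - θ₀ i‖ * ‖x‖ := abs_real_inner_le_norm _ _
        _ ≤ (R₀ / Real.sqrt m) * 1 :=
          mul_le_mul (hclose i) hx (norm_nonneg _) hRs
        _ = R₀ / Real.sqrt m := mul_one _
    have hinner : ⟪θ i - θ₀ i, x⟫ = ⟪θ i, x⟫ - ⟪θ₀ i, x⟫ := inner_sub_left _ _ _
    by_cases h1 : 0 ≤ ⟪θ i, x⟫ <;> by_cases h2 : 0 ≤ ⟪θ₀ i, x⟫ <;>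
      simp only [h1, h2, if_true, if_false, sub_self, zero_mul, abs_zero]
    · positivity
    · have hb : |⟪θ₀ i, x⟫| ≤ R₀ / Real.sqrt m := by
        rw [abs_of_nonpos (le_of_not_ge h2)]
        rw [hinner] at hdiff
        linarith [le_trans (le_abs_self _) hdiff]
      rw [if_pos hb, mul_one, sub_zero, one_mul]
      exact hb
    · have hb : |⟪θ₀ i, x⟫| ≤ R₀ / Real.sqrt m := by
        rw [abs_of_nonneg h2]
        rw [hinner] at hdiff
        have h1' := lt_of_not_ge h1
        linarith [le_trans (neg_le_neg hdiff) (neg_abs_le _)]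
      rw [if_pos hb, mul_one, zero_sub, neg_one_mul, abs_neg, abs_of_nonneg h2]
      rw [abs_of_nonneg h2] at hb
      exact hb
    · positivity
  calc (1 / Real.sqrt m) * ∑ i : Fin m,
        |((if 0 ≤ ⟪θ i, x⟫ then (1 : ℝ) else 0) -
          (if 0 ≤ ⟪θ₀ i, x⟫ then (1 : ℝ) else 0)) * ⟪θ₀ i, x⟫|
      ≤ (1 / Real.sqrt m) * ∑ i : Fin m,
        (R₀ / Real.sqrt m) * (if |⟪θ₀ i, x⟫| ≤ R₀ / Real.sqrt m then (1 : ℝ) else 0) :=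
        mul_le_mul_of_nonneg_left (Finset.sum_le_sum fun i _ => key i)
          (le_of_lt (one_div_pos.mpr hs))
    _ = (R₀ / m) * ∑ i : Fin m, (if |⟪θ₀ i, x⟫| ≤ R₀ / Real.sqrt m then (1 : ℝ) else 0) := by
        rw [← Finset.mul_sum, ← mul_assoc]
        congr 1
        rw [div_mul_div_comm, one_mul]
        congr 1
        rw [Real.mul_self_sqrt (Nat.cast_nonneg m)]
end
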